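/- Let ι be a finite index type and (V_i)_{i∈ι} a family of real normed vector spaces, and let v be an element of the algebraic tensor product ⨂_{i∈ι} V_i. Then for every j ∈ ι, the j-th minimal subspace computed with algebraic dual functionals coincides with the one computed with continuous dual functionals: span{(id_j ⊗ φ)(v) : φ_k ∈ (V_k)^* algebraic, k ≠ j} = span{(id_j ⊗ φ)(v) : φ_k ∈ (V_k)^* continuous, k ≠ j}. -/

import Mathlib

open scoped TensorProduct

section
variable {ι : Type*} [Fintype ι] [deq : DecidableEq ι] {𝕜 : Type*} [Field 𝕜]
  {V : ι → Type*} [∀ i, AddCommGroup (V i)] [∀ i, Module 𝕜 (V i)]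

/-- The multilinear map `(m_i)_{i} ↦ (∏_{k ≠ j} φ_k (m_k)) • m_j`. -/
def contractML (j : ι) (φ : ∀ k, V k →ₗ[𝕜] 𝕜) : MultilinearMap 𝕜 V (V j) where
  toFun m := (∏ k ∈ Finset.univ.erase j, φ k (m k)) • m j
  map_update_add' := by
    intro inst m k x y
    have h : inst = deq := Subsingleton.elim _ _
    subst h
    rcases eq_or_ne k j with rfl | hkj
    · have hprod : ∀ z : V k,
          (∏ i ∈ Finset.univ.erase k, φ i (Function.update m k z i))
            = ∏ i ∈ Finset.univ.erase k, φ i (m i) := fun z =>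
        Finset.prod_congr rfl fun i hi => by
          rw [Function.update_of_ne (Finset.ne_of_mem_erase hi)]
      rw [hprod, hprod, hprod, Function.update_self, Function.update_self,
        Function.update_self, smul_add]
    · have hmem : k ∈ Finset.univ.erase j := Finset.mem_erase.2 ⟨hkj, Finset.mem_univ k⟩
      have hprod : ∀ z : V k,
          (∏ i ∈ Finset.univ.erase j, φ i (Function.update m k z i))
            = φ k z * ∏ i ∈ (Finset.univ.erase j) \ {k}, φ i (m i) := by
        intro z
        have h1 : ∀ i, φ i (Function.update m k z i)
            = Function.update (fun i => φ i (m i)) k (φ k z) i := fun i =>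
          Function.apply_update (fun i v => φ i v) m k z i
        rw [Finset.prod_congr rfl (fun i _ => h1 i)]
        exact Finset.prod_update_of_mem hmem _ _
      have hj : ∀ z : V k, Function.update m k z j = m j := fun z =>
        Function.update_of_ne (Ne.symm hkj) _ _
      rw [hprod, hprod, hprod, hj, hj, hj, map_add, add_mul, add_smul]
  map_update_smul' := by
    intro inst m k c x
    have h : inst = deq := Subsingleton.elim _ _
    subst h
    rcases eq_or_ne k j with rfl | hkj
    · have hprod : ∀ z : V k,
          (∏ i ∈ Finset.univ.erase k, φ i (Function.update m k z i))
            = ∏ i ∈ Finset.univ.erase k, φ i (m i) := fun z =>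
        Finset.prod_congr rfl fun i hi => by
          rw [Function.update_of_ne (Finset.ne_of_mem_erase hi)]
      rw [hprod, hprod, Function.update_self, Function.update_self, smul_comm]
    · have hmem : k ∈ Finset.univ.erase j := Finset.mem_erase.2 ⟨hkj, Finset.mem_univ k⟩
      have hprod : ∀ z : V k,
          (∏ i ∈ Finset.univ.erase j, φ i (Function.update m k z i))
            = φ k z * ∏ i ∈ (Finset.univ.erase j) \ {k}, φ i (m i) := by
        intro z
        have h1 : ∀ i, φ i (Function.update m k z i)
            = Function.update (fun i => φ i (m i)) k (φ k z) i := fun i =>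
          Function.apply_update (fun i v => φ i v) m k z i
        rw [Finset.prod_congr rfl (fun i _ => h1 i)]
        exact Finset.prod_update_of_mem hmem _ _
      have hj : ∀ z : V k, Function.update m k z j = m j := fun z =>
        Function.update_of_ne (Ne.symm hkj) _ _
      rw [hprod, hprod, hj, hj, map_smul, smul_eq_mul, mul_assoc, mul_smul]

/-- The contraction `id_j ⊗ φ : ⨂ᵢ Vᵢ → V j` obtained by lifting the multilinear map
`(m_i)ᵢ ↦ (∏_{k ≠ j} φ_k (m_k)) • m_j`. -/
noncomputable def contract (j : ι) (φ : ∀ k, V k →ₗ[𝕜] 𝕜) :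
    (⨂[𝕜] i, V i) →ₗ[𝕜] V j :=
  PiTensorProduct.lift (contractML j φ)

/-- The `j`-th minimal subspace of a tensor `v`. -/
noncomputable def minimalSubspace (j : ι) (v : ⨂[𝕜] i, V i) : Submodule 𝕜 (V j) :=
  Submodule.span 𝕜 {x | ∃ φ : ∀ k, V k →ₗ[𝕜] 𝕜, contract j φ v = x}


end

section
variable {ι : Type*} [Fintype ι] [DecidableEq ι]
  {V : ι → Type*} [∀ i, NormedAddCommGroup (V i)] [∀ i, NormedSpace ℝ (V i)]

theorem exists_list_rep' (v : ⨂[ℝ] i, V i) :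
    ∃ l : List (ℝ × (∀ i, V i)),
      v = (l.map fun p => p.1 • PiTensorProduct.tprod ℝ p.2).sum := by
  induction v using PiTensorProduct.induction_on with
  | smul_tprod r m => exact ⟨[(r, m)], by simp⟩
  | add x y hx hy =>
    obtain ⟨l1, h1⟩ := hx
    obtain ⟨l2, h2⟩ := hy
    exact ⟨l1 ++ l2, by simp [h1, h2]⟩

theorem contract_tprod' (jj : ι) (φ : ∀ k, V k →ₗ[ℝ] ℝ) (m : ∀ i, V i) :
    contract jj φ (PiTensorProduct.tprod ℝ m)
      = (∏ k ∈ Finset.univ.erase jj, φ k (m k)) • m jj := by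
  unfold contract
  rw [PiTensorProduct.lift.tprod]
  rfl

/-- **Minimal subspaces via algebraic or continuous functionals.**
For a tensor `v` in the algebraic tensor product of the normed spaces `Vᵢ`, the `j`-th
minimal subspace computed with algebraic dual functionals coincides with the one computed
with continuous dual functionals. -/
theorem minimalSubspace_algebraic_eq_continuous (v : ⨂[ℝ] i, V i) (j : ι) :
    Submodule.span ℝ {x | ∃ φ : ∀ k, V k →ₗ[ℝ] ℝ, contract j φ v = x} =
    Submodule.span ℝ
      {x | ∃ φ : ∀ k, V k →L[ℝ] ℝ,
        contract j (fun k => (φ k : V k →ₗ[ℝ] ℝ)) v = x} := by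
  apply le_antisymm
  · rw [Submodule.span_le]
    rintro x ⟨φ, rfl⟩
    obtain ⟨l, hl⟩ := exists_list_rep' v
    have key : ∀ k, ∃ ψ : V k →L[ℝ] ℝ,
        ∀ p ∈ l, ψ (p.2 k) = φ k (p.2 k) := by
      intro k
      set W : Submodule ℝ (V k) :=
        Submodule.span ℝ ((fun p : ℝ × (∀ i, V i) => p.2 k) '' {p | p ∈ l}) with hW
      haveI : FiniteDimensional ℝ W :=
        FiniteDimensional.span_of_finite ℝ ((l.finite_toSet).image _)
      obtain ⟨g, hg, -⟩ := exists_extension_norm_eq W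
        (LinearMap.toContinuousLinearMap ((φ k).comp W.subtype))
      refine ⟨g, fun p hp => ?_⟩
      have hmem : p.2 k ∈ W := Submodule.subset_span ⟨p, hp, rfl⟩
      simpa using hg ⟨p.2 k, hmem⟩
    choose ψ hψ using key
    refine Submodule.subset_span ⟨ψ, ?_⟩
    rw [hl, map_list_sum, map_list_sum, List.map_map, List.map_map]
    congr 1
    refine List.map_congr_left fun p hp => ?_
    simp only [Function.comp_apply, map_smul]
    congr 1
    rw [contract_tprod', contract_tprod']
    congr 1
    exact Finset.prod_congr rfl fun k _ => hψ k p hp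
  · rw [Submodule.span_le]
    rintro x ⟨φ, rfl⟩
    exact Submodule.subset_span ⟨fun k => (φ k : V k →ₗ[ℝ] ℝ), rfl⟩

end
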